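/- Let (x_t) be a sequence in ℝ^n, h : ℕ → ℝ^n → ℝ, and let α : ℝ → ℝ be a function satisfying α(0) = 0, α(r) ≥ 0 and α(r) ≤ r for all r ≥ 0. If for every t with h(t, x_t) ≥ 0 the condition h(t+1, x_{t+1}) − h(t, x_t) ≥ −α(h(t, x_t)) holds, and h(0, x_0) ≥ 0, then h(t, x_t) ≥ 0 for all t ∈ ℕ. -/
import Mathlib

/-- Discrete-time CBF condition with a general rate function `α` satisfying
`α 0 = 0`, `0 ≤ α r` and `α r ≤ r` for `r ≥ 0` keeps the trajectory in the
time-varying safe set `S(t) = {x | h t x ≥ 0}`. -/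
theorem discrete_cbf_forward_invariance_classK
    {n : ℕ} (x : ℕ → (Fin n → ℝ)) (h : ℕ → (Fin n → ℝ) → ℝ)
    (α : ℝ → ℝ) (hα0 : α 0 = 0)
    (hαnonneg : ∀ r : ℝ, 0 ≤ r → 0 ≤ α r)
    (hαle : ∀ r : ℝ, 0 ≤ r → α r ≤ r)
    (hcbf : ∀ t : ℕ, h t (x t) ≥ 0 →
      h (t + 1) (x (t + 1)) - h t (x t) ≥ -α (h t (x t)))
    (hinit : h 0 (x 0) ≥ 0) :
    ∀ t : ℕ, h t (x t) ≥ 0 := by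
  intro t
  induction t with
  | zero => exact hinit
  | succ t ih =>
    have hc := hcbf t ih
    have := hαle _ ih
    linarith
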